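/- arXiv:2102.05002 — 2 statements merged into one kernel-verified Lean document; each statement's English description precedes it below -/
import Mathlib

section
/- Let G be a countable group with exactly 2 ends; that is, G contains two disjoint infinite almost invariant subsets, but does not contain three pairwise disjoint infinite almost invariant subsets. Then G is finitely generated and contains an infinite cyclic subgroup of finite index. -/
open Set

/-- A subset `A` of a group `G` is almost invariant if `A Δ (A·g)` is finite for every
`g : G`. -/
def AlmostInvariant {G : Type*} [Group G] (A : Set G) : Prop :=
  ∀ g : G, (symmDiff A ((fun a => a * g) '' A)).Finite

namespace TwoEnds

set_option linter.unusedSectionVars false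

variable {G : Type*} [Group G]

/-- Right translate `A·g`. -/
def rt (g : G) (A : Set G) : Set G := (fun a => a * g) '' A

/-- Left translate `g·A`. -/
def lt' (g : G) (A : Set G) : Set G := (fun a => g * a) '' A

lemma mem_rt {g y : G} {A : Set G} : y ∈ rt g A ↔ y * g⁻¹ ∈ A := by
  constructor
  · rintro ⟨a, ha, rfl⟩; simpa
  · intro h; exact ⟨y * g⁻¹, h, by simp⟩

lemma mem_lt {g y : G} {A : Set G} : y ∈ lt' g A ↔ g⁻¹ * y ∈ A := by
  constructor
  · rintro ⟨a, ha, rfl⟩; simpa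
  · intro h; exact ⟨g⁻¹ * y, h, by simp⟩

lemma rt_rt {g h : G} {A : Set G} : rt h (rt g A) = rt (g * h) A := by
  ext y; simp [mem_rt, mul_inv_rev, mul_assoc]

lemma lt_lt {g h : G} {A : Set G} : lt' g (lt' h A) = lt' (g * h) A := by
  ext y; simp [mem_lt, mul_inv_rev, mul_assoc]

lemma rt_one {A : Set G} : rt (1 : G) A = A := by ext y; simp [mem_rt]

lemma lt_one {A : Set G} : lt' (1 : G) A = A := by ext y; simp [mem_lt]

lemma rt_lt {t g : G} {A : Set G} : rt t (lt' g A) = lt' g (rt t A) := by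
  ext y; simp [mem_rt, mem_lt, mul_assoc]

lemma rt_compl {g : G} {A : Set G} : rt g Aᶜ = (rt g A)ᶜ := by
  ext y; simp [mem_rt]

lemma lt_compl {g : G} {A : Set G} : lt' g Aᶜ = (lt' g A)ᶜ := by
  ext y; simp [mem_lt]

lemma rt_symmDiff {g : G} {A B : Set G} :
    rt g (symmDiff A B) = symmDiff (rt g A) (rt g B) := by
  ext y; simp [mem_rt, Set.mem_symmDiff]

lemma lt_symmDiff {g : G} {A B : Set G} :
    lt' g (symmDiff A B) = symmDiff (lt' g A) (lt' g B) := by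
  ext y; simp [mem_lt, Set.mem_symmDiff]

lemma rt_finite {g : G} {A : Set G} (h : A.Finite) : (rt g A).Finite := h.image _

lemma lt_finite {g : G} {A : Set G} (h : A.Finite) : (lt' g A).Finite := h.image _

lemma rt_infinite {g : G} {A : Set G} (h : A.Infinite) : (rt g A).Infinite :=
  h.image (Set.injOn_of_injective (fun a b hab => by
    simpa using mul_right_cancel (b := g) hab))

lemma lt_infinite {g : G} {A : Set G} (h : A.Infinite) : (lt' g A).Infinite :=
  h.image (Set.injOn_of_injective (fun a b hab => by
    simpa using mul_left_cancel (a := g) hab))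

lemma ai_iff {A : Set G} : AlmostInvariant A ↔ ∀ g : G, (symmDiff A (rt g A)).Finite :=
  Iff.rfl

/-- `A` and `B` differ by a finite set. -/
def Near (A B : Set G) : Prop := (symmDiff A B).Finite

lemma Near.refl (A : Set G) : Near A A := by
  simp only [Near, symmDiff_self]
  exact Set.finite_empty

lemma Near.symm {A B : Set G} (h : Near A B) : Near B A := by
  rwa [Near, symmDiff_comm]

lemma Near.trans {A B C : Set G} (h1 : Near A B) (h2 : Near B C) : Near A C :=
  Set.Finite.subset (h1.union h2) (symmDiff_triangle A B C)

lemma Near.lt {A B : Set G} (g : G) (h : Near A B) : Near (lt' g A) (lt' g B) := by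
  rw [Near, ← lt_symmDiff]; exact lt_finite h

lemma Near.rt {A B : Set G} (g : G) (h : Near A B) : Near (rt g A) (rt g B) := by
  rw [Near, ← rt_symmDiff]; exact rt_finite h

lemma Near.compl {A B : Set G} (h : Near A B) : Near Aᶜ Bᶜ := by
  rwa [Near, compl_symmDiff_compl]

lemma Near.infinite {A B : Set G} (h : Near A B) (hA : A.Infinite) : B.Infinite := by
  intro hBfin
  have : A ⊆ B ∪ symmDiff A B := by
    intro x hx
    by_cases hxB : x ∈ B
    · exact Or.inl hxB
    · exact Or.inr (Set.mem_symmDiff.mpr (Or.inl ⟨hx, hxB⟩))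
  exact hA (Set.Finite.subset (hBfin.union h) this)

lemma ai_compl {A : Set G} (h : AlmostInvariant A) : AlmostInvariant Aᶜ := by
  intro g
  have := h g
  rw [ai_iff] at *
  show (symmDiff Aᶜ (rt g Aᶜ)).Finite
  rw [rt_compl, compl_symmDiff_compl]
  exact this

lemma ai_inter {A B : Set G} (hA : AlmostInvariant A) (hB : AlmostInvariant B) :
    AlmostInvariant (A ∩ B) := by
  intro g
  show (symmDiff (A ∩ B) (rt g (A ∩ B))).Finite
  have hsub : symmDiff (A ∩ B) (rt g (A ∩ B)) ⊆
      symmDiff A (rt g A) ∪ symmDiff B (rt g B) := by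
    intro x hx
    rcases Set.mem_symmDiff.mp hx with ⟨⟨hxA, hxB⟩, hx2⟩ | ⟨hx1, hx2⟩
    · rw [mem_rt, Set.mem_inter_iff, not_and_or] at hx2
      rcases hx2 with h | h
      · exact Or.inl (Set.mem_symmDiff.mpr (Or.inl ⟨hxA, by rwa [mem_rt]⟩))
      · exact Or.inr (Set.mem_symmDiff.mpr (Or.inl ⟨hxB, by rwa [mem_rt]⟩))
    · rw [mem_rt, Set.mem_inter_iff] at hx1
      rw [Set.mem_inter_iff, not_and_or] at hx2
      rcases hx2 with h | h
      · exact Or.inl (Set.mem_symmDiff.mpr (Or.inr ⟨by rw [mem_rt]; exact hx1.1, h⟩))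
      · exact Or.inr (Set.mem_symmDiff.mpr (Or.inr ⟨by rw [mem_rt]; exact hx1.2, h⟩))
  exact Set.Finite.subset ((hA g).union (hB g)) hsub

lemma ai_lt {A : Set G} (g : G) (h : AlmostInvariant A) : AlmostInvariant (lt' g A) := by
  intro t
  show (symmDiff (lt' g A) (rt t (lt' g A))).Finite
  rw [rt_lt, ← lt_symmDiff]
  exact lt_finite (h t)

lemma ai_near {A B : Set G} (h : Near A B) (hA : AlmostInvariant A) : AlmostInvariant B := by
  intro t
  show (symmDiff B (rt t B)).Finite
  have h1 : Near B A := h.symm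
  have h2 : Near A (rt t A) := hA t
  have h3 : Near (rt t A) (rt t B) := h.rt t
  exact (h1.trans (h2.trans h3))


section WithHyp

variable (h3 : ¬ ∃ A : Fin 3 → Set G, (∀ i, (A i).Infinite ∧ AlmostInvariant (A i)) ∧
      Pairwise (Function.onFun Disjoint A))

include h3

lemma no_three {X Y Z : Set G}
    (hX : X.Infinite) (aX : AlmostInvariant X)
    (hY : Y.Infinite) (aY : AlmostInvariant Y)
    (hZ : Z.Infinite) (aZ : AlmostInvariant Z)
    (dXY : Disjoint X Y) (dXZ : Disjoint X Z) (dYZ : Disjoint Y Z) : False := by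
  apply h3
  refine ⟨![X, Y, Z], ?_, ?_⟩
  · intro i
    fin_cases i
    · exact ⟨hX, aX⟩
    · exact ⟨hY, aY⟩
    · exact ⟨hZ, aZ⟩
  · intro i j hij
    fin_cases i <;> fin_cases j <;>
      simp only [Function.onFun, Matrix.cons_val_zero, Matrix.cons_val_one,
        Matrix.head_cons, Matrix.cons_val_two, Matrix.tail_cons] <;>
      first
        | exact absurd rfl hij
        | exact dXY
        | exact dXY.symm
        | exact dXZ
        | exact dXZ.symm
        | exact dYZ
        | exact dYZ.symm

omit h3 in
lemma infinite_of_union_left {S T : Set G} (h : (S ∪ T).Infinite) (hS : S.Finite) :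
    T.Infinite := by
  intro hT
  exact h (hS.union hT)

lemma dichotomy {A C : Set G}
    (hA : AlmostInvariant A) (hAi : A.Infinite) (hAci : Aᶜ.Infinite)
    (hC : AlmostInvariant C) (hCi : C.Infinite) (hCci : Cᶜ.Infinite) :
    Near C A ∨ Near C Aᶜ := by
  have e1 : A = (A ∩ C) ∪ (A ∩ Cᶜ) := by
    ext x; by_cases h : x ∈ C <;> simp [h]
  have e2 : Aᶜ = (Aᶜ ∩ C) ∪ (Aᶜ ∩ Cᶜ) := by
    ext x; by_cases h : x ∈ C <;> simp [h]
  have e3 : C = (A ∩ C) ∪ (Aᶜ ∩ C) := by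
    ext x; by_cases h : x ∈ A <;> simp [h]
  have e4 : Cᶜ = (A ∩ Cᶜ) ∪ (Aᶜ ∩ Cᶜ) := by
    ext x; by_cases h : x ∈ A <;> simp [h]
  have a1 : AlmostInvariant (A ∩ C) := ai_inter hA hC
  have a2 : AlmostInvariant (A ∩ Cᶜ) := ai_inter hA (ai_compl hC)
  have a3 : AlmostInvariant (Aᶜ ∩ C) := ai_inter (ai_compl hA) hC
  have a4 : AlmostInvariant (Aᶜ ∩ Cᶜ) := ai_inter (ai_compl hA) (ai_compl hC)
  have d12 : Disjoint (A ∩ C) (A ∩ Cᶜ) :=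
    Set.disjoint_left.mpr (fun x hx hx' => hx'.2 hx.2)
  have d13 : Disjoint (A ∩ C) (Aᶜ ∩ C) :=
    Set.disjoint_left.mpr (fun x hx hx' => hx'.1 hx.1)
  have d14 : Disjoint (A ∩ C) (Aᶜ ∩ Cᶜ) :=
    Set.disjoint_left.mpr (fun x hx hx' => hx'.1 hx.1)
  have d23 : Disjoint (A ∩ Cᶜ) (Aᶜ ∩ C) :=
    Set.disjoint_left.mpr (fun x hx hx' => hx'.1 hx.1)
  have d24 : Disjoint (A ∩ Cᶜ) (Aᶜ ∩ Cᶜ) :=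
    Set.disjoint_left.mpr (fun x hx hx' => hx'.1 hx.1)
  have d34 : Disjoint (Aᶜ ∩ C) (Aᶜ ∩ Cᶜ) :=
    Set.disjoint_left.mpr (fun x hx hx' => hx'.2 hx.2)
  by_cases f2 : (A ∩ Cᶜ).Finite
  · by_cases f3 : (Aᶜ ∩ C).Finite
    · left
      have he : symmDiff C A = (Aᶜ ∩ C) ∪ (A ∩ Cᶜ) := by
        rw [Set.symmDiff_def]
        ext x
        simp only [Set.mem_union, Set.mem_diff, Set.mem_inter_iff, Set.mem_compl_iff,
          Set.sup_eq_union]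
        tauto
      rw [Near, he]
      exact f3.union f2
    · have i3 : (Aᶜ ∩ C).Infinite := f3
      have i1 : (A ∩ C).Infinite := by
        rw [e1] at hAi
        intro h; exact hAi (h.union f2)
      have i4 : (Aᶜ ∩ Cᶜ).Infinite := by
        rw [e4] at hCci
        exact infinite_of_union_left hCci f2
      exact (no_three h3 i1 a1 i3 a3 i4 a4 d13 d14 d34).elim
  · by_cases f3 : (Aᶜ ∩ C).Finite
    · have i2 : (A ∩ Cᶜ).Infinite := f2
      have i1 : (A ∩ C).Infinite := by
        rw [e3] at hCi
        intro h; exact hCi (h.union f3)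
      have i4 : (Aᶜ ∩ Cᶜ).Infinite := by
        rw [e2] at hAci
        exact infinite_of_union_left hAci f3
      exact (no_three h3 i1 a1 i2 a2 i4 a4 d12 d14 d24).elim
    · have i2 : (A ∩ Cᶜ).Infinite := f2
      have i3 : (Aᶜ ∩ C).Infinite := f3
      by_cases f1 : (A ∩ C).Finite
      · by_cases f4 : (Aᶜ ∩ Cᶜ).Finite
        · right
          have he : symmDiff C Aᶜ = (A ∩ C) ∪ (Aᶜ ∩ Cᶜ) := by
            rw [Set.symmDiff_def]
            ext x
            simp only [Set.mem_union, Set.mem_diff, Set.mem_inter_iff, Set.mem_compl_iff,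
              Set.sup_eq_union, not_not]
            tauto
          rw [Near, he]
          exact f1.union f4
        · exact (no_three h3 i2 a2 i3 a3 f4 a4 d23 d24 d34).elim
      · exact (no_three h3 f1 a1 i2 a2 i3 a3 d12 d13 d23).elim


omit h3 in
lemma infinite_G_of {A : Set G} (hAi : A.Infinite) : Infinite G :=
  Set.infinite_univ_iff.mp (hAi.mono (Set.subset_univ A))

/-- The subgroup of elements whose left translate of `A` is near `A`. -/
def Hgrp (A : Set G) : Subgroup G where
  carrier := {g | Near (lt' g A) A}
  one_mem' := by
    simp only [Set.mem_setOf_eq, lt_one]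
    exact Near.refl A
  mul_mem' := by
    intro a b ha hb
    simp only [Set.mem_setOf_eq] at *
    have h1 : Near (lt' a (lt' b A)) (lt' a A) := hb.lt a
    rw [lt_lt] at h1
    exact h1.trans ha
  inv_mem' := by
    intro a ha
    simp only [Set.mem_setOf_eq] at *
    have h1 := (ha.symm).lt a⁻¹
    rw [lt_lt, inv_mul_cancel, lt_one] at h1
    exact h1

omit h3 in
lemma mem_Hgrp {A : Set G} {g : G} : g ∈ Hgrp A ↔ Near (lt' g A) A := Iff.rfl

lemma not_mem_Hgrp {A : Set G} {g : G}
    (hA : AlmostInvariant A) (hAi : A.Infinite) (hAci : Aᶜ.Infinite)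
    (hg : g ∉ Hgrp A) : Near (lt' g A) Aᶜ := by
  have hC : AlmostInvariant (lt' g A) := ai_lt g hA
  have hCi : (lt' g A).Infinite := lt_infinite hAi
  have hCci : (lt' g A)ᶜ.Infinite := by
    rw [← lt_compl]
    exact lt_infinite hAci
  rcases dichotomy h3 hA hAi hAci hC hCi hCci with h | h
  · exact absurd h hg
  · exact h

lemma Hgrp_infinite {A : Set G}
    (hA : AlmostInvariant A) (hAi : A.Infinite) (hAci : Aᶜ.Infinite) :
    ((Hgrp A : Subgroup G) : Set G).Infinite := by
  have hGinf : Infinite G := infinite_G_of hAi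
  by_cases hH : ∀ g : G, g ∈ Hgrp A
  · have : ((Hgrp A : Subgroup G) : Set G) = Set.univ := by
      ext x; simp [hH x]
    rw [this]
    exact Set.infinite_univ
  · push_neg at hH
    obtain ⟨t, ht⟩ := hH
    have hcov : (Set.univ : Set G) ⊆
        ((Hgrp A : Subgroup G) : Set G) ∪ lt' t ((Hgrp A : Subgroup G) : Set G) := by
      intro g _
      by_cases hg : g ∈ Hgrp A
      · exact Or.inl hg
      · right
        rw [mem_lt]
        show t⁻¹ * g ∈ Hgrp A
        rw [mem_Hgrp]
        have h1 : Near (lt' (t⁻¹ * g) A) (lt' t⁻¹ (lt' g A)) := by rw [lt_lt]; exact Near.refl _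
        have h2 : Near (lt' t⁻¹ (lt' g A)) (lt' t⁻¹ Aᶜ) :=
          (not_mem_Hgrp h3 hA hAi hAci hg).lt t⁻¹
        have h3' : Near (lt' t⁻¹ Aᶜ) A := by
          have := ((not_mem_Hgrp h3 hA hAi hAci ht).symm).lt t⁻¹
          rwa [lt_lt, inv_mul_cancel, lt_one] at this
        exact (h1.trans h2).trans h3'
    intro hfin
    exact Set.infinite_univ (Set.Finite.subset (hfin.union (lt_finite hfin)) hcov)

omit h3 in
lemma stab_finite {Y : Set G} (aY : AlmostInvariant Y) (hne : Y.Nonempty)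
    (hproper : Yᶜ.Nonempty) : {x : G | lt' x Y = Y}.Finite := by
  obtain ⟨y, hy⟩ := hne
  obtain ⟨z, hz⟩ := hproper
  set t := y⁻¹ * z with hht
  have hmem : z ∈ rt t Y := by
    rw [mem_rt]
    have : z * t⁻¹ = y := by
      rw [hht]; group
    rwa [this]
  have hzd : z ∈ symmDiff Y (rt t Y) := Set.mem_symmDiff.mpr (Or.inr ⟨hmem, hz⟩)
  have hsub : {x : G | lt' x Y = Y} ⊆ (fun d => d * z⁻¹) '' (symmDiff Y (rt t Y)) := by
    intro x hx
    refine ⟨x * z, ?_, by simp⟩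
    have hinv : lt' x (symmDiff Y (rt t Y)) = symmDiff Y (rt t Y) := by
      rw [lt_symmDiff, ← rt_lt, hx]
    rw [← hinv]
    rw [mem_lt] at *
    show x⁻¹ * (x * z) ∈ _
    simpa using hzd
  exact Set.Finite.subset (((aY t).image _)) hsub


omit h3 in
lemma not_mem_symmDiff {a : G} {X Y : Set G} (h : a ∉ symmDiff X Y) : a ∈ X ↔ a ∈ Y := by
  rw [Set.mem_symmDiff] at h
  tauto

omit h3 in
lemma coset_const {A : Set G} {S : Set G} {E : Set G}
    (hE : ∀ s ∈ S, symmDiff (lt' s A) A ⊆ E)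
    {x : G} (hdisj : ∀ w ∈ Subgroup.closure S, w * x ∉ E) :
    ∀ w ∈ Subgroup.closure S, (w * x ∈ A ↔ x ∈ A) := by
  have key : ∀ w ∈ Subgroup.closure S,
      ∀ u ∈ Subgroup.closure S, (w * (u * x) ∈ A ↔ u * x ∈ A) := by
    intro w hw
    induction hw using Subgroup.closure_induction with
    | mem s hs =>
      intro u hu
      have hsE : s * (u * x) ∉ E := by
        have : s * (u * x) = (s * u) * x := by group
        rw [this]
        exact hdisj (s * u) (mul_mem (Subgroup.subset_closure hs) hu)
      have hns : s * (u * x) ∉ symmDiff (lt' s A) A := fun hm => hsE (hE s hs hm)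
      have h2 : s * (u * x) ∈ lt' s A ↔ u * x ∈ A := by
        rw [mem_lt]
        simp
      exact ((not_mem_symmDiff hns).symm.trans h2)
    | one =>
      intro u hu
      simp
    | mul w1 w2 hw1 hw2 ih1 ih2 =>
      intro u hu
      have e : (w1 * w2) * (u * x) = w1 * ((w2 * u) * x) := by group
      rw [e]
      have i1 := ih1 (w2 * u) (mul_mem hw2 hu)
      have e2 : (w2 * u) * x = w2 * (u * x) := by group
      refine i1.trans ?_
      rw [e2]
      exact ih2 u hu
    | inv w hw ih =>
      intro u hu
      have i1 := ih (w⁻¹ * u) (mul_mem (inv_mem hw) hu)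
      have e1 : w * ((w⁻¹ * u) * x) = u * x := by group
      have e2 : (w⁻¹ * u) * x = w⁻¹ * (u * x) := by group
      rw [e1, e2] at i1
      exact i1.symm
  intro w hw
  have := key w hw 1 (one_mem _)
  simpa using this

omit h3 in
lemma master' {Λ : Subgroup G} {A : Set G}
    (hA : AlmostInvariant A) {E : Set G} (hEfin : E.Finite)
    (hE : ∀ x : G, (∃ w ∈ Λ, w * x ∈ A) → (∃ w ∈ Λ, w * x ∈ Aᶜ) → ∃ w ∈ Λ, w * x ∈ E)
    (hAci : Aᶜ.Infinite)
    (hmeet : ∀ x : G, ∃ w ∈ Λ, w * x ∈ A) : Λ.FiniteIndex := by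
  classical
  -- Aᶜ is covered by the cosets of points of E
  have hcov : Aᶜ ⊆ ⋃ e ∈ E, ((fun w => w * e) '' (Λ : Set G) ∩ Aᶜ) := by
    intro x hx
    obtain ⟨w, hw, hwE⟩ := hE x (hmeet x) ⟨1, one_mem _, by simpa using hx⟩
    refine Set.mem_biUnion hwE ⟨⟨w⁻¹, inv_mem hw, by group⟩, hx⟩
  have hpig : ∃ e ∈ E, ((fun w => w * e) '' (Λ : Set G) ∩ Aᶜ).Infinite := by
    by_contra hcon
    push_neg at hcon
    have hfin : (⋃ e ∈ E, ((fun w => w * e) '' (Λ : Set G) ∩ Aᶜ)).Finite :=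
      Set.Finite.biUnion hEfin (fun e he => hcon e he)
    exact hAci (hfin.subset hcov)
  obtain ⟨e₀, he₀, hinf⟩ := hpig
  set D := ((fun w => w * e₀) '' (Λ : Set G) ∩ Aᶜ) with hD
  have hstep : ∀ t : G, ∃ w ∈ Λ, w * (e₀ * t) ∈ E := by
    intro t
    have hDt : (rt t D).Infinite := rt_infinite hinf
    have hmeets : ∃ y ∈ rt t D, y ∈ Aᶜ := by
      have hsub : rt t D \ Aᶜ ⊆ symmDiff Aᶜ (rt t Aᶜ) := by
        intro y ⟨hy1, hy2⟩
        have : y ∈ rt t Aᶜ := by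
          rw [mem_rt]
          rw [mem_rt] at hy1
          exact hy1.2
        exact Set.mem_symmDiff.mpr (Or.inr ⟨this, hy2⟩)
      have hfin : (rt t D \ Aᶜ).Finite := ((ai_compl hA) t).subset hsub
      have : (rt t D ∩ Aᶜ).Infinite := by
        intro hccon
        exact hDt (by
          have : rt t D ⊆ (rt t D ∩ Aᶜ) ∪ (rt t D \ Aᶜ) := by
            intro y hy
            by_cases h : y ∈ Aᶜ
            · exact Or.inl ⟨hy, h⟩
            · exact Or.inr ⟨hy, h⟩
          exact (hccon.union hfin).subset this)
      obtain ⟨y, hy⟩ := this.nonempty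
      exact ⟨y, hy.1, hy.2⟩
    obtain ⟨y, hy1, hy2⟩ := hmeets
    rw [mem_rt, hD] at hy1
    obtain ⟨⟨w, hw, hwe⟩, _⟩ := hy1
    -- y * t⁻¹ = w * e₀, so y = w * (e₀ * t)
    have hyw : y = w * (e₀ * t) := by
      have : y * t⁻¹ = w * e₀ := hwe.symm
      calc y = (y * t⁻¹) * t := by group
      _ = (w * e₀) * t := by rw [this]
      _ = w * (e₀ * t) := by group
    exact hE (e₀ * t) (hmeet _) ⟨w, hw, by rw [← hyw]; exact hy2⟩
  -- finite index via the conjugate subgroup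
  set c : G ≃* G := MulAut.conj e₀
  set Λ'' : Subgroup G := Λ.comap c.toMonoidHom with hΛ''
  have hmem'' : ∀ z : G, z ∈ Λ'' ↔ e₀ * z * e₀⁻¹ ∈ Λ := by
    intro z
    rw [hΛ'', Subgroup.mem_comap]
    rfl
  have hquot'' : Finite (G ⧸ Λ'') := by
    rw [← Set.finite_univ_iff]
    have : (Set.univ : Set (G ⧸ Λ'')) ⊆
        (fun e => QuotientGroup.mk (e⁻¹ * e₀)) '' E := by
      rintro q -
      obtain ⟨y, rfl⟩ := QuotientGroup.mk_surjective q
      obtain ⟨w, hw, hwE⟩ := hstep y⁻¹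
      set e := w * (e₀ * y⁻¹) with he
      refine ⟨e, hwE, ?_⟩
      have : (e⁻¹ * e₀)⁻¹ * y ∈ Λ'' := by
        rw [hmem'']
        have heq : e₀ * ((e⁻¹ * e₀)⁻¹ * y) * e₀⁻¹ = w := by
          rw [he]; group
        rw [heq]
        exact hw
      exact (QuotientGroup.eq.mpr this)
    exact Set.Finite.subset (hEfin.image _) this
  have hquot : Finite (G ⧸ Λ) := by
    have hsurj : Function.Surjective
        (fun q : G ⧸ Λ'' => Quotient.map' (fun x => e₀ * x * e₀⁻¹)
          (by
            intro x y hxy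
            rw [QuotientGroup.leftRel_apply] at *
            rw [hmem''] at hxy
            have heq : e₀ * (x⁻¹ * y) * e₀⁻¹ = (e₀ * x * e₀⁻¹)⁻¹ * (e₀ * y * e₀⁻¹) := by
              group
            rwa [heq] at hxy) q) := by
      intro q
      obtain ⟨y, rfl⟩ := QuotientGroup.mk_surjective q
      refine ⟨QuotientGroup.mk (e₀⁻¹ * y * e₀), ?_⟩
      show Quotient.map' _ _ _ = _
      have : (e₀ * (e₀⁻¹ * y * e₀) * e₀⁻¹) = y := by group
      simp only [Quotient.map'_mk'']
      rw [this]
    exact Finite.of_surjective _ hsurj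
  haveI := hquot
  exact Subgroup.finiteIndex_of_finite_quotient

omit h3 in
lemma master {Λ : Subgroup G} (hΛ : (Λ : Set G).Infinite) {A : Set G}
    (hA : AlmostInvariant A) {E : Set G} (hEfin : E.Finite)
    (hE : ∀ x : G, (∃ w ∈ Λ, w * x ∈ A) → (∃ w ∈ Λ, w * x ∈ Aᶜ) → ∃ w ∈ Λ, w * x ∈ E)
    (hAi : A.Infinite) (hAci : Aᶜ.Infinite) : Λ.FiniteIndex := by
  by_cases hb : ∃ b : G, ∀ w ∈ Λ, w * b ∈ Aᶜ
  · obtain ⟨b, hball⟩ := hb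
    by_cases ha : ∃ a : G, ∀ w ∈ Λ, w * a ∈ A
    · exfalso
      obtain ⟨a, hball'⟩ := ha
      set t := a⁻¹ * b with ht
      have hsub : (fun w => w * b) '' (Λ : Set G) ⊆ symmDiff A (rt t A) := by
        rintro y ⟨w, hw, rfl⟩
        refine Set.mem_symmDiff.mpr (Or.inr ⟨?_, ?_⟩)
        · rw [mem_rt]
          have : w * b * t⁻¹ = w * a := by rw [ht]; group
          rw [this]
          exact hball' w hw
        · exact hball w hw
      have hinf : ((fun w => w * b) '' (Λ : Set G)).Infinite :=
        hΛ.image (Set.injOn_of_injective (mul_left_injective b))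
      exact hinf ((hA t).subset hsub)
    · push_neg at ha
      refine master' (ai_compl hA) hEfin ?_ (by rwa [compl_compl]) ?_
      · intro x h1 h2
        rw [compl_compl] at h2
        exact hE x h2 h1
      · intro x
        obtain ⟨w, hw, hwx⟩ := ha x
        exact ⟨w, hw, hwx⟩
  · push_neg at hb
    refine master' hA hEfin hE hAci ?_
    intro x
    obtain ⟨w, hw, hwx⟩ := hb x
    exact ⟨w, hw, by simpa using hwx⟩


omit h3 in
lemma fg_of_closure_finiteIndex {S : Set G} (hS : S.Finite)
    (hfi : (Subgroup.closure S).FiniteIndex) : Group.FG G := by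
  classical
  haveI := hfi
  haveI hquot : Finite (G ⧸ Subgroup.closure S) := Subgroup.finite_quotient_of_finiteIndex
  set T : Set G := Set.range (fun q : G ⧸ Subgroup.closure S => (Quotient.out q : G)) with hT
  rw [Group.fg_iff]
  refine ⟨S ∪ T, ?_, hS.union (Set.finite_range _)⟩
  rw [eq_top_iff]
  intro x _
  set q : G ⧸ Subgroup.closure S := QuotientGroup.mk x with hq
  set r : G := Quotient.out q with hr
  have hrx : r⁻¹ * x ∈ Subgroup.closure S := by
    rw [← QuotientGroup.eq]
    rw [hr, hq]
    exact Quotient.out_eq _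
  have h1 : r ∈ Subgroup.closure (S ∪ T) :=
    Subgroup.subset_closure (Or.inr ⟨q, rfl⟩)
  have h2 : r⁻¹ * x ∈ Subgroup.closure (S ∪ T) :=
    Subgroup.closure_mono Set.subset_union_left hrx
  have := mul_mem h1 h2
  simpa using this

lemma locally_finite_contra [Countable G] (hGinf : Infinite G)
    (hLF : ∀ T : Finset G, ((Subgroup.closure (T : Set G) : Subgroup G) : Set G).Finite) :
    False := by
  classical
  obtain ⟨f, hf⟩ := exists_surjective_nat G
  set Γ : ℕ → Subgroup G := fun n => Subgroup.closure (f '' {i | i < n}) with hΓ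
  have Γfin : ∀ n, ((Γ n : Subgroup G) : Set G).Finite := by
    intro n
    have : f '' {i | i < n} = ((Finset.range n).image f : Finset G) := by
      ext y
      simp [Finset.mem_image, Finset.mem_range]
    rw [hΓ]
    simp only
    rw [this]
    exact hLF _
  have Γmono : ∀ {m n : ℕ}, m ≤ n → Γ m ≤ Γ n := by
    intro m n hmn
    exact Subgroup.closure_mono (Set.image_mono (fun i hi => lt_of_lt_of_le hi hmn))
  have hex : ∀ x : G, ∃ n, x ∈ Γ n := by
    intro x
    obtain ⟨i, rfl⟩ := hf x
    exact ⟨i + 1, Subgroup.subset_closure ⟨i, Nat.lt_succ_self i, rfl⟩⟩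
  haveI : ∀ x : G, DecidablePred fun n => x ∈ Γ n := fun x n => Classical.dec _
  set τ : G → ℕ := fun x => Nat.find (hex x) with hτ
  have hτmem : ∀ x, x ∈ Γ (τ x) := fun x => Nat.find_spec (hex x)
  have hτmin : ∀ x, ∀ m < τ x, x ∉ Γ m := fun x m hm => Nat.find_min (hex x) hm
  -- key stability property
  have key : ∀ (t x : G), τ t < τ x → τ t⁻¹ < τ x → τ (x * t) = τ x := by
    intro t x h1 h2
    have hxt : x * t ∈ Γ (τ x) := mul_mem (hτmem x) (Γmono h1.le (hτmem t))
    have hle : τ (x * t) ≤ τ x := Nat.find_min' (hex (x * t)) hxt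
    rcases lt_or_eq_of_le hle with hlt | heq
    · exfalso
      set k := max (τ (x * t)) (τ t⁻¹) with hk
      have hx : x ∈ Γ k := by
        have hxt' : x * t ∈ Γ k := Γmono (le_max_left _ _) (hτmem (x * t))
        have ht' : t⁻¹ ∈ Γ k := Γmono (le_max_right _ _) (hτmem t⁻¹)
        have : (x * t) * t⁻¹ ∈ Γ k := mul_mem hxt' ht'
        simpa using this
      have hklt : k < τ x := max_lt hlt h2
      exact hτmin x k hklt hx
    · exact heq
  -- the range of τ is infinite
  have hRngInf : (Set.range τ).Infinite := by
    intro hfin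
    obtain ⟨N, hN⟩ := hfin.bddAbove
    obtain ⟨x, hx⟩ := (Γfin N).infinite_compl.nonempty
    have hτx : τ x ≤ N := hN ⟨x, rfl⟩
    exact hx (Γmono hτx (hτmem x))
  set emb := hRngInf.natEmbedding with hemb
  set lvl : ℕ → ℕ := fun k => (emb k : ℕ) with hlvl
  have lvlinj : Function.Injective lvl := by
    intro a b hab
    exact emb.injective (Subtype.ext hab)
  have lvlmem : ∀ k, lvl k ∈ Set.range τ := fun k => (emb k).2
  -- the three sets
  set C : ℕ → Set G := fun i => {x | ∃ k, τ x = lvl (3 * k + i)} with hC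
  have hCai : ∀ i, AlmostInvariant (C i) := by
    intro i t
    show (symmDiff (C i) (rt t (C i))).Finite
    set m := max (τ t) (τ t⁻¹) with hm
    have hsub : symmDiff (C i) (rt t (C i)) ⊆ ((Γ m : Subgroup G) : Set G) := by
      intro x hx
      by_contra hxΓ
      have hτx : m < τ x := by
        by_contra hle
        push_neg at hle
        exact hxΓ (Γmono hle (hτmem x))
      have heq : τ (x * t⁻¹) = τ x := by
        apply key t⁻¹ x
        · exact lt_of_le_of_lt (le_max_right _ _) hτx
        · simp only [inv_inv]
          exact lt_of_le_of_lt (le_max_left _ _) hτx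
      have hmemiff : x ∈ C i ↔ x * t⁻¹ ∈ C i := by
        rw [hC]
        simp only [Set.mem_setOf_eq, heq]
      have hrt : x ∈ rt t (C i) ↔ x * t⁻¹ ∈ C i := mem_rt
      rcases Set.mem_symmDiff.mp hx with ⟨h1, h2⟩ | ⟨h1, h2⟩
      · exact h2 (hrt.mpr (hmemiff.mp h1))
      · exact h2 (hmemiff.mpr (hrt.mp h1))
    exact (Γfin m).subset hsub
  have hCinf : ∀ i, (C i).Infinite := by
    intro i
    have hch : ∀ k : ℕ, ∃ x : G, τ x = lvl (3 * k + i) := by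
      intro k
      obtain ⟨x, hx⟩ := lvlmem (3 * k + i)
      exact ⟨x, hx⟩
    set ch : ℕ → G := fun k => Classical.choose (hch k) with hch'
    have hchspec : ∀ k, τ (ch k) = lvl (3 * k + i) := fun k => Classical.choose_spec (hch k)
    apply Set.infinite_of_injective_forall_mem (f := ch)
    case hi =>
      intro a b hab
      have : lvl (3 * a + i) = lvl (3 * b + i) := by
        rw [← hchspec a, ← hchspec b, hab]
      have := lvlinj this
      omega
    case hf =>
      intro k
      exact ⟨k, hchspec k⟩
  have hdisj : ∀ i j : ℕ, i < 3 → j < 3 → i ≠ j → Disjoint (C i) (C j) := by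
    intro i j hi hj hij
    rw [Set.disjoint_left]
    rintro x ⟨k, hk⟩ ⟨k', hk'⟩
    rw [hk] at hk'
    have := lvlinj hk'
    omega
  exact no_three h3 (hCinf 0) (hCai 0) (hCinf 1) (hCai 1) (hCinf 2) (hCai 2)
    (hdisj 0 1 (by omega) (by omega) (by omega))
    (hdisj 0 2 (by omega) (by omega) (by omega))
    (hdisj 1 2 (by omega) (by omega) (by omega))


lemma Hgrp_two_cosets {A : Set G}
    (hA : AlmostInvariant A) (hAi : A.Infinite) (hAci : Aᶜ.Infinite)
    {t g : G} (ht : t ∉ Hgrp A) (hg : g ∉ Hgrp A) : t⁻¹ * g ∈ Hgrp A := by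
  rw [mem_Hgrp]
  have h1 : Near (lt' (t⁻¹ * g) A) (lt' t⁻¹ (lt' g A)) := by
    rw [lt_lt]; exact Near.refl _
  have h2 : Near (lt' t⁻¹ (lt' g A)) (lt' t⁻¹ Aᶜ) :=
    (not_mem_Hgrp h3 hA hAi hAci hg).lt t⁻¹
  have h3' : Near (lt' t⁻¹ Aᶜ) A := by
    have := ((not_mem_Hgrp h3 hA hAi hAci ht).symm).lt t⁻¹
    rwa [lt_lt, inv_mul_cancel, lt_one] at this
  exact (h1.trans h2).trans h3'

lemma exists_fg {A : Set G}
    (hA : AlmostInvariant A) (hAi : A.Infinite) (hAci : Aᶜ.Infinite)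
    (T : Finset G) (hTinf : ((Subgroup.closure (T : Set G) : Subgroup G) : Set G).Infinite) :
    Group.FG G := by
  classical
  set Λ' : Subgroup G := Subgroup.closure (T : Set G) with hΛ'
  set K : Subgroup G := Hgrp A ⊓ Λ' with hK
  have hKle : K ≤ Λ' := inf_le_right
  -- K is infinite
  have hKinf : ((K : Subgroup G) : Set G).Infinite := by
    by_cases hsub : ∀ x ∈ Λ', x ∈ Hgrp A
    · have : ((K : Subgroup G) : Set G) = ((Λ' : Subgroup G) : Set G) := by
        ext x
        simp only [hK, Subgroup.coe_inf, Set.mem_inter_iff, SetLike.mem_coe]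
        exact ⟨fun h => h.2, fun h => ⟨hsub x h, h⟩⟩
      rw [this]
      exact hTinf
    · push_neg at hsub
      obtain ⟨t, htΛ, htH⟩ := hsub
      have hcov : ((Λ' : Subgroup G) : Set G) ⊆
          ((K : Subgroup G) : Set G) ∪ lt' t ((K : Subgroup G) : Set G) := by
        intro x hx
        have hxΛ : x ∈ Λ' := hx
        by_cases hxH : x ∈ Hgrp A
        · exact Or.inl (Subgroup.mem_inf.mpr ⟨hxH, hxΛ⟩)
        · right
          rw [mem_lt]
          have : t⁻¹ * x ∈ K := Subgroup.mem_inf.mpr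
            ⟨Hgrp_two_cosets h3 hA hAi hAci htH hxH, mul_mem (inv_mem htΛ) hxΛ⟩
          exact this
      intro hKfin
      exact hTinf ((hKfin.union (lt_finite hKfin)).subset hcov)
  -- K is finitely generated
  have hKfg : Subgroup.FG K := by
    haveI hΛfg : Group.FG ↥Λ' := by
      rw [Group.fg_iff_subgroup_fg]
      exact ⟨T, rfl⟩
    by_cases hsub : ∀ x ∈ Λ', x ∈ Hgrp A
    · have : K = Λ' := by
        rw [hK, inf_eq_right]
        intro x hx
        exact hsub x hx
      rw [this]
      exact ⟨T, rfl⟩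
    · push_neg at hsub
      obtain ⟨t, htΛ, htH⟩ := hsub
      set K' : Subgroup ↥Λ' := K.subgroupOf Λ' with hK'
      haveI hfinq : Finite (↥Λ' ⧸ K') := by
        have hsurj : Function.Surjective (fun b : Bool =>
            (QuotientGroup.mk (cond b (⟨t, htΛ⟩ : ↥Λ') 1) : ↥Λ' ⧸ K')) := by
          intro q
          obtain ⟨x, rfl⟩ := QuotientGroup.mk_surjective q
          by_cases hxH : (x : G) ∈ Hgrp A
          · refine ⟨false, ?_⟩
            show (QuotientGroup.mk (cond false (⟨t, htΛ⟩ : ↥Λ') 1) : ↥Λ' ⧸ K') = _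
            rw [Bool.cond_false, QuotientGroup.eq, Subgroup.mem_subgroupOf, hK,
              Subgroup.mem_inf]
            constructor
            · simpa using hxH
            · simpa using x.2
          · refine ⟨true, ?_⟩
            show (QuotientGroup.mk (cond true (⟨t, htΛ⟩ : ↥Λ') 1) : ↥Λ' ⧸ K') = _
            rw [Bool.cond_true, QuotientGroup.eq, Subgroup.mem_subgroupOf, hK,
              Subgroup.mem_inf]
            constructor
            · show ((⟨t, htΛ⟩ : ↥Λ')⁻¹ * x : G) ∈ Hgrp A
              exact Hgrp_two_cosets h3 hA hAi hAci htH hxH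
            · show ((⟨t, htΛ⟩ : ↥Λ')⁻¹ * x : G) ∈ Λ'
              exact mul_mem (inv_mem htΛ) x.2
        exact Finite.of_surjective _ hsurj
      haveI : K'.FiniteIndex := Subgroup.finiteIndex_of_finite_quotient
      haveI hK'fg : Group.FG ↥K' := Subgroup.fg_of_index_ne_zero _
      have hKfg' : Group.FG ↥K := by
        have he : ↥K' ≃* ↥K := Subgroup.subgroupOfEquivOfLe hKle
        exact Group.fg_of_surjective (f := he.toMonoidHom) he.surjective
      rw [← Group.fg_iff_subgroup_fg]
      exact hKfg'
  -- extract generators of K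
  obtain ⟨S'', hScl, hSfin⟩ := (Subgroup.fg_iff K).mp hKfg
  have hS''sub : S'' ⊆ (K : Set G) := by
    intro s hs
    rw [← hScl]
    exact Subgroup.subset_closure hs
  -- boundary set
  set E : Set G := ⋃ s ∈ S'', symmDiff (lt' s A) A with hE
  have hEfin : E.Finite := by
    apply Set.Finite.biUnion hSfin
    intro s hs
    have hsK : s ∈ K := hS''sub hs
    exact (Subgroup.mem_inf.mp hsK).1
  have hEsub : ∀ s ∈ S'', symmDiff (lt' s A) A ⊆ E := by
    intro s hs
    exact Set.subset_biUnion_of_mem (u := fun s => symmDiff (lt' s A) A) hs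
  -- apply the master lemma
  have hKfi : K.FiniteIndex := by
    apply master hKinf hA hEfin ?_ hAi hAci
    intro x h1 h2
    by_contra hcon
    push_neg at hcon
    have hdisj : ∀ w ∈ Subgroup.closure S'', w * x ∉ E := by
      intro w hw
      rw [hScl] at hw
      exact hcon w hw
    have hconst := coset_const hEsub hdisj
    obtain ⟨w1, hw1, hw1A⟩ := h1
    obtain ⟨w2, hw2, hw2A⟩ := h2
    rw [← hScl] at hw1 hw2
    exact hw2A ((hconst w2 hw2).mpr ((hconst w1 hw1).mp hw1A))
  have : (Subgroup.closure S'').FiniteIndex := by rwa [hScl]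
  exact fg_of_closure_finiteIndex hSfin this

end WithHyp

section Machine

variable (S2 B : Set G)

/-- One step of right multiplication by a generator. -/
def stepF (x y : G) : Prop := ∃ s ∈ S2, y = x * s

/-- One step avoiding the finite set `B`. -/
def stp (x y : G) : Prop := x ∉ B ∧ y ∉ B ∧ stepF S2 x y

/-- Connectivity in the complement of `B`. -/
def conn (x y : G) : Prop := Relation.ReflTransGen (stp S2 B) x y

/-- The connected component of `x` in the complement of `B`. -/
def cc (x : G) : Set G := {y | conn S2 B x y}

variable {S2 B}

lemma stepF_symm (hinv : ∀ s ∈ S2, s⁻¹ ∈ S2) {x y : G} (h : stepF S2 x y) :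
    stepF S2 y x := by
  obtain ⟨s, hs, rfl⟩ := h
  exact ⟨s⁻¹, hinv s hs, by group⟩

lemma stp_symm (hinv : ∀ s ∈ S2, s⁻¹ ∈ S2) {x y : G} (h : stp S2 B x y) :
    stp S2 B y x :=
  ⟨h.2.1, h.1, stepF_symm hinv h.2.2⟩

lemma conn_symm (hinv : ∀ s ∈ S2, s⁻¹ ∈ S2) {x y : G} (h : conn S2 B x y) :
    conn S2 B y x :=
  (@Relation.ReflTransGen.symmetric _ _ ⟨fun _ _ h' => stp_symm hinv h'⟩).symm _ _ h

lemma conn_trans {x y z : G} (h1 : conn S2 B x y) (h2 : conn S2 B y z) :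
    conn S2 B x z :=
  Relation.ReflTransGen.trans h1 h2

lemma stepF_translate {a x y : G} (h : stepF S2 x y) : stepF S2 (a * x) (a * y) := by
  obtain ⟨s, hs, rfl⟩ := h
  exact ⟨s, hs, by group⟩

lemma rtg_stepF_translate {a x y : G} (h : Relation.ReflTransGen (stepF S2) x y) :
    Relation.ReflTransGen (stepF S2) (a * x) (a * y) := by
  induction h with
  | refl => exact Relation.ReflTransGen.refl
  | tail _ hstep ih => exact ih.tail (stepF_translate hstep)

lemma conn0_total (hgen : Subgroup.closure S2 = ⊤) (hinv : ∀ s ∈ S2, s⁻¹ ∈ S2)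
    (x : G) : Relation.ReflTransGen (stepF S2) 1 x := by
  have hx : x ∈ Subgroup.closure S2 := by rw [hgen]; exact Subgroup.mem_top x
  induction hx using Subgroup.closure_induction with
  | mem s hs => exact Relation.ReflTransGen.single ⟨s, hs, (one_mul s).symm⟩
  | one => exact Relation.ReflTransGen.refl
  | mul w1 w2 hw1 hw2 ih1 ih2 =>
    have h2' : Relation.ReflTransGen (stepF S2) w1 (w1 * w2) := by
      have := rtg_stepF_translate (a := w1) ih2
      rwa [mul_one] at this
    exact ih1.trans h2'
  | inv w hw ih =>
    have h1 : Relation.ReflTransGen (stepF S2) w 1 :=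
      (@Relation.ReflTransGen.symmetric _ _ ⟨fun _ _ h' => stepF_symm hinv h'⟩).symm _ _ ih
    have := rtg_stepF_translate (a := w⁻¹) h1
    rwa [inv_mul_cancel, mul_one] at this

lemma conn_A_iff {A : Set G} (hB : ∀ s ∈ S2, symmDiff A (rt s A) ⊆ B)
    {x y : G} (h : conn S2 B x y) : (x ∈ A ↔ y ∈ A) := by
  induction h with
  | refl => exact Iff.rfl
  | tail _ hstep ih =>
    obtain ⟨_, hcB, s, hs, rfl⟩ := hstep
    refine ih.trans ?_
    have hnot : _ * s ∉ symmDiff A (rt s A) := fun hm => hcB (hB s hs hm)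
    have h2 := not_mem_symmDiff hnot
    rw [mem_rt] at h2
    simp only [mul_inv_cancel_right] at h2
    exact h2.symm

lemma cc_self (x : G) : x ∈ cc S2 B x := Relation.ReflTransGen.refl

lemma cc_subset_compl {x : G} (hx : x ∉ B) : cc S2 B x ⊆ Bᶜ := by
  intro y hy
  rcases Relation.ReflTransGen.cases_tail hy with h | ⟨z, _, hstep⟩
  · rwa [← h] at hx
  · exact hstep.2.1

lemma cc_eq_of_conn (hinv : ∀ s ∈ S2, s⁻¹ ∈ S2) {x y : G} (h : conn S2 B x y) :
    cc S2 B x = cc S2 B y := by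
  ext z
  exact ⟨fun hz => conn_trans (conn_symm hinv h) hz, fun hz => conn_trans h hz⟩

lemma cc_eq_of_mem (hinv : ∀ s ∈ S2, s⁻¹ ∈ S2) {x y : G} (h : y ∈ cc S2 B x) :
    cc S2 B x = cc S2 B y := cc_eq_of_conn hinv h

lemma cc_disjoint_of_ne (hinv : ∀ s ∈ S2, s⁻¹ ∈ S2) {x y : G}
    (h : cc S2 B x ≠ cc S2 B y) : Disjoint (cc S2 B x) (cc S2 B y) := by
  rw [Set.disjoint_left]
  intro z hzx hzy
  exact h ((cc_eq_of_mem hinv hzx).trans (cc_eq_of_mem hinv hzy).symm)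

/-- Every point outside `B` is connected to a point of the "frontier". -/
lemma hitting (hgen : Subgroup.closure S2 = ⊤) (hinv : ∀ s ∈ S2, s⁻¹ ∈ S2)
    {x : G} (hx : x ∉ B) :
    ∃ y, y ∈ ((⋃ s ∈ S2, rt s B) ∪ {1}) \ B ∧ conn S2 B x y := by
  have h0 : Relation.ReflTransGen (stepF S2) x 1 :=
    (@Relation.ReflTransGen.symmetric _ _ ⟨fun _ _ h' => stepF_symm hinv h'⟩).symm _ _ (conn0_total hgen hinv x)
  revert hx
  induction h0 using Relation.ReflTransGen.head_induction_on with
  | refl =>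
    intro h1
    exact ⟨1, ⟨Or.inr rfl, h1⟩, Relation.ReflTransGen.refl⟩
  | head hstep htail ih =>
    rename_i a c
    intro ha
    obtain ⟨s, hs, rfl⟩ := hstep
    by_cases hc : a * s ∈ B
    · refine ⟨a, ⟨Or.inl ?_, ha⟩, Relation.ReflTransGen.refl⟩
      refine Set.mem_biUnion (hinv s hs) ?_
      rw [mem_rt]
      simpa using hc
    · obtain ⟨y, hy, hconn⟩ := ih hc
      exact ⟨y, hy, Relation.ReflTransGen.head ⟨ha, hc, s, hs, rfl⟩ hconn⟩

/-- Certificate: a finite set of chain vertices which, when translated away from `B`,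
yields connectivity between `t` and `t * w`. -/
lemma cert (hgen : Subgroup.closure S2 = ⊤) (hinv : ∀ s ∈ S2, s⁻¹ ∈ S2) (w : G) :
    ∃ F : Set G, F.Finite ∧ 1 ∈ F ∧ w ∈ F ∧
      ∀ t : G, (∀ y ∈ F, t * y ∉ B) → conn S2 B t (t * w) := by
  have h0 : Relation.ReflTransGen (stepF S2) 1 w := conn0_total hgen hinv w
  induction h0 with
  | refl =>
    refine ⟨{1}, Set.finite_singleton 1, rfl, rfl, ?_⟩
    intro t _
    rw [mul_one]
    exact Relation.ReflTransGen.refl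
  | tail hb hstep ih =>
    rename_i b c
    obtain ⟨F, hFfin, h1F, hbF, hF⟩ := ih
    refine ⟨insert c F, hFfin.insert c, Set.mem_insert_of_mem _ h1F,
      Set.mem_insert _ _, ?_⟩
    intro t ht
    have hconn : conn S2 B t (t * b) := hF t (fun y hy => ht y (Set.mem_insert_of_mem _ hy))
    obtain ⟨s, hs, rfl⟩ := hstep
    refine hconn.tail ⟨ht b (Set.mem_insert_of_mem _ hbF), ?_, s, hs, by group⟩
    exact ht (b * s) (Set.mem_insert _ _)

lemma conn_strengthen {B' : Set G} {u v : G}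
    (h : conn S2 B u v) (hdisj : ∀ z ∈ cc S2 B u, z ∉ B') : conn S2 B' u v := by
  induction h with
  | refl => exact Relation.ReflTransGen.refl
  | tail hub hstep ih =>
    rename_i b c
    refine ih.tail ⟨hdisj b hub, hdisj c (hub.tail hstep), hstep.2.2⟩

lemma conn_shift {a u v : G} (h : conn S2 B u v) : conn S2 (lt' a B) (a * u) (a * v) := by
  induction h with
  | refl => exact Relation.ReflTransGen.refl
  | tail _ hstep ih =>
    rename_i b c
    refine ih.tail ⟨?_, ?_, stepF_translate hstep.2.2⟩
    · rw [mem_lt]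
      simpa using hstep.1
    · rw [mem_lt]
      simpa using hstep.2.1

lemma ai_of_gens (hgen : Subgroup.closure S2 = ⊤) {C : Set G}
    (h : ∀ s ∈ S2, (symmDiff C (rt s C)).Finite) : AlmostInvariant C := by
  set T : Subgroup G :=
    { carrier := {g | Near C (rt g C)}
      one_mem' := by
        simp only [Set.mem_setOf_eq, rt_one]
        exact Near.refl C
      mul_mem' := by
        intro a b ha hb
        simp only [Set.mem_setOf_eq] at *
        have h1 : Near (rt b C) (rt b (rt a C)) := ha.rt b
        rw [rt_rt] at h1
        exact hb.trans h1
      inv_mem' := by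
        intro a ha
        simp only [Set.mem_setOf_eq] at *
        have h1 := (ha.symm).rt a⁻¹
        rwa [rt_rt, mul_inv_cancel, rt_one] at h1 } with hT
  have hsub : Subgroup.closure S2 ≤ T := by
    rw [Subgroup.closure_le]
    intro s hs
    exact h s hs
  rw [hgen] at hsub
  intro g
  exact hsub (Subgroup.mem_top g)

/-- Connected components are almost invariant. -/
lemma cc_ai (hgen : Subgroup.closure S2 = ⊤) (hinv : ∀ s ∈ S2, s⁻¹ ∈ S2)
    (hBfin : B.Finite) {x₀ : G} (hx₀ : x₀ ∉ B) : AlmostInvariant (cc S2 B x₀) := by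
  apply ai_of_gens hgen
  intro s hs
  have hsub : symmDiff (cc S2 B x₀) (rt s (cc S2 B x₀)) ⊆ B ∪ rt s B := by
    intro x hx
    rcases Set.mem_symmDiff.mp hx with ⟨h1, h2⟩ | ⟨h1, h2⟩
    · -- x ∈ cc, x*s⁻¹ ∉ cc
      rw [mem_rt] at h2
      by_cases hxB : x * s⁻¹ ∈ B
      · right
        rw [mem_rt]
        exact hxB
      · exfalso
        apply h2
        refine Relation.ReflTransGen.tail h1 ⟨cc_subset_compl hx₀ h1, hxB, s⁻¹, hinv s hs, rfl⟩
    · -- x*s⁻¹ ∈ cc, x ∉ cc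
      rw [mem_rt] at h1
      by_cases hxB : x ∈ B
      · exact Or.inl hxB
      · exfalso
        apply h2
        have hxs : x * s⁻¹ ∉ B := cc_subset_compl hx₀ h1
        refine Relation.ReflTransGen.tail h1 ⟨hxs, hxB, s, hs, by group⟩
  exact (hBfin.union (rt_finite hBfin)).subset hsub


lemma lt_ssubset {a : G} {C D : Set G} (h : C ⊂ D) : lt' a C ⊂ lt' a D := by
  constructor
  · intro y hy
    rw [mem_lt] at *
    exact h.1 hy
  · intro hcon
    refine h.2 ?_
    intro d hd
    have : a * d ∈ lt' a D := by rw [mem_lt]; simpa using hd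
    have := hcon this
    rw [mem_lt] at this
    simpa using this

lemma push_core {S2 B : Set G} (hinv : ∀ s ∈ S2, s⁻¹ ∈ S2)
    {A : Set G} {u₀ v₀ x : G}
    (hu₀ : u₀ ∉ B) (hv₀ : v₀ ∉ B)
    (hUV : Disjoint (cc S2 B u₀) (cc S2 B v₀))
    (hVinf : (cc S2 B v₀).Infinite)
    (huniq : ∀ y, y ∉ B → (cc S2 B y).Infinite →
        cc S2 B y = cc S2 B u₀ ∨ cc S2 B y = cc S2 B v₀)
    (hUA : Near (cc S2 B u₀) A)
    (hVAc : cc S2 B v₀ ⊆ Aᶜ)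
    (hx : x ∈ cc S2 B u₀)
    (hpush : ∀ w ∈ (cc S2 B u₀ ∪ cc S2 B v₀)ᶜ, conn S2 B x (x * w))
    (hxH : Near (lt' x A) A)
    (hstab : lt' x (cc S2 B v₀) ≠ cc S2 B v₀) :
    ¬ IsOfFinOrder x := by
  intro hford
  -- every translate of a point of B lands in U
  have hVB : ∀ b ∈ B, x * b ∈ cc S2 B u₀ := by
    intro b hb
    have hbW : b ∈ (cc S2 B u₀ ∪ cc S2 B v₀)ᶜ := by
      intro hbUV
      rcases hbUV with h | h
      · exact cc_subset_compl hu₀ h hb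
      · exact cc_subset_compl hv₀ h hb
    exact conn_trans hx (hpush b hbW)
  have hVB' : ∀ v ∈ cc S2 B v₀, v ∉ lt' x B := by
    intro v hv hvB
    rw [mem_lt] at hvB
    have h1 := hVB _ hvB
    rw [mul_inv_cancel_left] at h1
    exact Set.disjoint_left.mp hUV h1 hv
  have hz₀ : x⁻¹ * v₀ ∉ B := by
    have := hVB' v₀ (cc_self v₀)
    rw [mem_lt] at this
    exact this
  have hsubC : ∀ v ∈ cc S2 B v₀, x⁻¹ * v ∈ cc S2 B (x⁻¹ * v₀) := by
    intro v hv
    have h1 : conn S2 B v₀ v := hv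
    have h2 : conn S2 (lt' x B) v₀ v := conn_strengthen h1 (fun z hz => hVB' z hz)
    have h3 : conn S2 (lt' x⁻¹ (lt' x B)) (x⁻¹ * v₀) (x⁻¹ * v) := conn_shift h2
    rwa [lt_lt, inv_mul_cancel, lt_one] at h3
  have hC₀inf : (cc S2 B (x⁻¹ * v₀)).Infinite := by
    have himg : lt' x⁻¹ (cc S2 B v₀) ⊆ cc S2 B (x⁻¹ * v₀) := by
      intro y hy
      rw [mem_lt, inv_inv] at hy
      have := hsubC (x * y) hy
      rwa [inv_mul_cancel_left] at this
    exact (lt_infinite hVinf).mono himg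
  rcases huniq _ hz₀ hC₀inf with hU' | hV'
  · -- the opposite class maps into the `A`-side: contradiction with V infinite
    have hVsub : cc S2 B v₀ ⊆ lt' x (cc S2 B u₀) := by
      intro v hv
      rw [mem_lt]
      rw [← hU']
      exact hsubC v hv
    have hnear : Near (lt' x (cc S2 B u₀)) A := (hUA.lt x).trans hxH
    have hsub2 : cc S2 B v₀ ⊆ symmDiff (lt' x (cc S2 B u₀)) A := by
      intro v hv
      exact Set.mem_symmDiff.mpr (Or.inl ⟨hVsub hv, hVAc hv⟩)
    exact hVinf (hnear.subset hsub2)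
  · -- strict nesting: contradiction with finite order
    have hsub : cc S2 B v₀ ⊆ lt' x (cc S2 B v₀) := by
      intro v hv
      rw [mem_lt, ← hV']
      exact hsubC v hv
    have hss : cc S2 B v₀ ⊂ lt' x (cc S2 B v₀) :=
      Set.ssubset_iff_subset_ne.mpr ⟨hsub, fun h => hstab h.symm⟩
    have hiter : ∀ n : ℕ, cc S2 B v₀ ⊂ lt' (x ^ (n + 1)) (cc S2 B v₀) := by
      intro n
      induction n with
      | zero => simpa [pow_one] using hss
      | succ m ih =>
        have h2 := lt_ssubset (a := x) ih
        rw [lt_lt, ← pow_succ'] at h2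
        exact hss.trans h2
    obtain ⟨n, hn, hxn⟩ := isOfFinOrder_iff_pow_eq_one.mp hford
    obtain ⟨m, rfl⟩ : ∃ m, n = m + 1 := ⟨n - 1, by omega⟩
    have hfin := hiter m
    rw [hxn, lt_one] at hfin
    exact (ssubset_irrefl _) hfin

end Machine

section Main

variable (h3 : ¬ ∃ A : Fin 3 → Set G, (∀ i, (A i).Infinite ∧ AlmostInvariant (A i)) ∧
      Pairwise (Function.onFun Disjoint A))

include h3

lemma machine {A : Set G}
    (hA : AlmostInvariant A) (hAi : A.Infinite) (hAci : Aᶜ.Infinite)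
    (S : Finset G) (hSgen : Subgroup.closure (S : Set G) = ⊤) :
    ∃ g : G, ¬ IsOfFinOrder g ∧ g ∈ Hgrp A := by
  classical
  set S2 : Set G := (S : Set G) ∪ ((S : Set G))⁻¹ with hS2
  have hS2fin : S2.Finite := S.finite_toSet.union (by
    rw [← Set.image_inv_eq_inv]
    exact S.finite_toSet.image _)
  have hinv : ∀ s ∈ S2, s⁻¹ ∈ S2 := by
    intro s hs
    rcases hs with h | h
    · right
      rwa [Set.mem_inv, inv_inv]
    · left
      rwa [Set.mem_inv] at h
  have hgen : Subgroup.closure S2 = ⊤ := by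
    rw [eq_top_iff, ← hSgen]
    exact Subgroup.closure_mono Set.subset_union_left
  set E : Set G := ⋃ s ∈ S2, symmDiff A (rt s A) with hE
  have hEfin : E.Finite := Set.Finite.biUnion hS2fin (fun s _ => hA s)
  set B : Set G := E ∪ {1} with hB
  have hBfin : B.Finite := hEfin.union (Set.finite_singleton 1)
  have hBprop : ∀ s ∈ S2, symmDiff A (rt s A) ⊆ B := by
    intro s hs
    exact (Set.subset_biUnion_of_mem (u := fun s => symmDiff A (rt s A)) hs).trans
      Set.subset_union_left
  have hBpropc : ∀ s ∈ S2, symmDiff Aᶜ (rt s Aᶜ) ⊆ B := by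
    intro s hs
    rw [rt_compl, compl_symmDiff_compl]
    exact hBprop s hs
  set FB : Set G := ((⋃ s ∈ S2, rt s B) ∪ {1}) \ B with hFB
  have hFBfin : FB.Finite :=
    ((Set.Finite.biUnion hS2fin (fun s _ => rt_finite hBfin)).union
      (Set.finite_singleton 1)).diff
  -- pigeonhole: every infinite conn-invariant set contains an infinite class
  have pigeon : ∀ (D : Set G), D.Infinite →
      (∀ {x y : G}, conn S2 B x y → (x ∈ D ↔ y ∈ D)) →
      ∃ y₀, (y₀ ∈ FB ∧ y₀ ∉ B) ∧ y₀ ∈ D ∧ (cc S2 B y₀).Infinite := by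
    intro D hDinf hmono
    have hsub : D \ B ⊆ ⋃ y ∈ FB ∩ D, cc S2 B y := by
      intro z hz
      obtain ⟨y, hyFB, hconn⟩ := hitting hgen hinv hz.2
      exact Set.mem_biUnion ⟨hyFB, (hmono hconn).mp hz.1⟩ (conn_symm hinv hconn)
    by_contra hcon
    push_neg at hcon
    have hallfin : ∀ y ∈ FB ∩ D, (cc S2 B y).Finite := by
      intro y hy
      have hyB : y ∉ B := hy.1.2
      exact hcon y ⟨hy.1, hyB⟩ hy.2
    have : (D \ B).Finite :=
      (Set.Finite.biUnion (hFBfin.inter_of_left D) hallfin).subset hsub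
    exact hDinf.diff hBfin this
  obtain ⟨u₀, ⟨hu₀FB, hu₀B⟩, hu₀A, hUinf⟩ :=
    pigeon A hAi (fun h => conn_A_iff hBprop h)
  obtain ⟨v₀, ⟨hv₀FB, hv₀B⟩, hv₀A, hVinf⟩ :=
    pigeon Aᶜ hAci (fun h => conn_A_iff hBpropc h)
  have hUsubA : cc S2 B u₀ ⊆ A := fun y hy => (conn_A_iff hBprop hy).mp hu₀A
  have hVsubAc : cc S2 B v₀ ⊆ Aᶜ := fun y hy => (conn_A_iff hBpropc hy).mp hv₀A
  have hUVne : cc S2 B u₀ ≠ cc S2 B v₀ := by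
    intro h
    exact hVsubAc (h ▸ cc_self u₀) hu₀A
  have hUV : Disjoint (cc S2 B u₀) (cc S2 B v₀) := cc_disjoint_of_ne hinv hUVne
  have huniq : ∀ y, y ∉ B → (cc S2 B y).Infinite →
      cc S2 B y = cc S2 B u₀ ∨ cc S2 B y = cc S2 B v₀ := by
    intro y hyB hyinf
    by_contra hcon
    push_neg at hcon
    exact no_three h3 hyinf (cc_ai hgen hinv hBfin hyB)
      hUinf (cc_ai hgen hinv hBfin hu₀B)
      hVinf (cc_ai hgen hinv hBfin hv₀B)
      (cc_disjoint_of_ne hinv hcon.1) (cc_disjoint_of_ne hinv hcon.2)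
      (cc_disjoint_of_ne hinv hUVne)
  have hWfin : ((cc S2 B u₀ ∪ cc S2 B v₀)ᶜ).Finite := by
    have hsub : (cc S2 B u₀ ∪ cc S2 B v₀)ᶜ ⊆
        B ∪ ⋃ y ∈ {y ∈ FB | (cc S2 B y).Finite}, cc S2 B y := by
      intro z hz
      by_cases hzB : z ∈ B
      · exact Or.inl hzB
      · right
        obtain ⟨y, hyFB, hconn⟩ := hitting hgen hinv hzB
        have hzy : z ∈ cc S2 B y := conn_symm hinv hconn
        have hyB : y ∉ B := hyFB.2
        have hfin : (cc S2 B y).Finite := by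
          by_contra hinf
          rcases huniq y hyB hinf with h | h
          · exact hz (Or.inl (h ▸ hzy))
          · exact hz (Or.inr (h ▸ hzy))
        exact Set.mem_biUnion ⟨hyFB, hfin⟩ hzy
    refine (hBfin.union (Set.Finite.biUnion ?_ (fun y hy => hy.2))).subset hsub
    exact hFBfin.subset (Set.sep_subset _ _)
  have hNearUA : Near (cc S2 B u₀) A := by
    refine hWfin.subset ?_
    intro z hz
    rcases Set.mem_symmDiff.mp hz with ⟨h1, h2⟩ | ⟨h1, h2⟩
    · exact absurd (hUsubA h1) h2
    · intro hUV'
      rcases hUV' with h | h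
      · exact h2 h
      · exact hVsubAc h h1
  have hNearVAc : Near (cc S2 B v₀) Aᶜ := by
    refine hWfin.subset ?_
    intro z hz
    rcases Set.mem_symmDiff.mp hz with ⟨h1, h2⟩ | ⟨h1, h2⟩
    · exact absurd (hVsubAc h1) h2
    · intro hUV'
      rcases hUV' with h | h
      · exact h1 (hUsubA h)
      · exact h2 h
  have hv₀U : v₀ ∉ cc S2 B u₀ := fun h => Set.disjoint_left.mp hUV h (cc_self v₀)
  have hu₀V : u₀ ∉ cc S2 B v₀ := fun h => Set.disjoint_right.mp hUV h (cc_self u₀)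
  have hstabUfin : {g : G | lt' g (cc S2 B u₀) = cc S2 B u₀}.Finite :=
    stab_finite (cc_ai hgen hinv hBfin hu₀B) ⟨u₀, cc_self u₀⟩ ⟨v₀, hv₀U⟩
  have hstabVfin : {g : G | lt' g (cc S2 B v₀) = cc S2 B v₀}.Finite :=
    stab_finite (cc_ai hgen hinv hBfin hv₀B) ⟨v₀, cc_self v₀⟩ ⟨u₀, hu₀V⟩
  -- path certificates for points of the finite "middle" set
  set W : Set G := (cc S2 B u₀ ∪ cc S2 B v₀)ᶜ with hW
  set P : Set G := ⋃ w ∈ W, Classical.choose (cert (B := B) hgen hinv w) with hP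
  have hPfin : P.Finite :=
    Set.Finite.biUnion hWfin (fun w _ => (Classical.choose_spec (cert (B := B) hgen hinv w)).1)
  set BADP : Set G := ⋃ y ∈ P, rt y⁻¹ B with hBADP
  have hBADPfin : BADP.Finite :=
    Set.Finite.biUnion hPfin (fun y _ => rt_finite hBfin)
  -- choose an element of `Hgrp A` avoiding all bad sets
  obtain ⟨x, hx⟩ :=
    (((((Hgrp_infinite h3 hA hAi hAci).diff hWfin).diff hBADPfin).diff
      hstabUfin).diff hstabVfin).nonempty
  have hxH : x ∈ Hgrp A := hx.1.1.1.1
  have hxW : x ∉ W := hx.1.1.1.2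
  have hxBADP : x ∉ BADP := hx.1.1.2
  have hxstabU : lt' x (cc S2 B u₀) ≠ cc S2 B u₀ := hx.1.2
  have hxstabV : lt' x (cc S2 B v₀) ≠ cc S2 B v₀ := hx.2
  have hxUV : x ∈ cc S2 B u₀ ∪ cc S2 B v₀ := by
    by_contra h
    exact hxW h
  have hpush : ∀ w ∈ W, conn S2 B x (x * w) := by
    intro w hw
    obtain ⟨hFfin, h1F, hwF, himp⟩ := Classical.choose_spec (cert (B := B) hgen hinv w)
    apply himp
    intro y hy hxyB
    apply hxBADP
    rw [hBADP]
    refine Set.mem_biUnion (Set.mem_biUnion hw hy) ?_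
    rw [mem_rt, inv_inv]
    exact hxyB
  rcases hxUV with hxU | hxV
  · refine ⟨x, ?_, hxH⟩
    exact push_core hinv hu₀B hv₀B hUV hVinf huniq hNearUA hVsubAc hxU hpush hxH hxstabV
  · refine ⟨x, ?_, hxH⟩
    have huniq' : ∀ y, y ∉ B → (cc S2 B y).Infinite →
        cc S2 B y = cc S2 B v₀ ∨ cc S2 B y = cc S2 B u₀ :=
      fun y hy hyinf => (huniq y hy hyinf).symm
    have hUsubcc : cc S2 B u₀ ⊆ (Aᶜ)ᶜ := by
      rw [compl_compl]
      exact hUsubA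
    have hpush' : ∀ w ∈ (cc S2 B v₀ ∪ cc S2 B u₀)ᶜ, conn S2 B x (x * w) := by
      rw [Set.union_comm]
      exact hpush
    have hxHc : Near (lt' x Aᶜ) Aᶜ := by
      rw [lt_compl]
      exact (Near.compl hxH)
    exact push_core hinv hv₀B hu₀B hUV.symm hUinf huniq' hNearVAc hUsubcc hxV hpush' hxHc
      hxstabU

end Main

end TwoEnds

open TwoEnds in
/-- Theorem 5.12: a countable group with exactly two ends (it has two disjoint infinite
almost invariant subsets but no three pairwise disjoint ones) is finitely generated and
contains an infinite cyclic subgroup of finite index. -/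
theorem two_ends_implies_virtually_cyclic
    {G : Type*} [Group G] [Countable G]
    (h2 : ∃ A B : Set G, A.Infinite ∧ AlmostInvariant A ∧ B.Infinite ∧
      AlmostInvariant B ∧ Disjoint A B)
    (h3 : ¬ ∃ A : Fin 3 → Set G, (∀ i, (A i).Infinite ∧ AlmostInvariant (A i)) ∧
      Pairwise (Function.onFun Disjoint A)) :
    Group.FG G ∧ ∃ g : G, ¬ IsOfFinOrder g ∧ (Subgroup.zpowers g).FiniteIndex := by
  classical
  obtain ⟨A, Bset, hAi, hA, hBi, hB, hdisj⟩ := h2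
  have hBsub : Bset ⊆ Aᶜ := fun x hx hxA => Set.disjoint_left.mp hdisj hxA hx
  have hAci : Aᶜ.Infinite := hBi.mono hBsub
  by_cases hLF : ∀ T : Finset G, ((Subgroup.closure (T : Set G) : Subgroup G) : Set G).Finite
  · exact (locally_finite_contra h3 (infinite_G_of hAi) hLF).elim
  · push_neg at hLF
    obtain ⟨T, hTinf⟩ := hLF
    have hTinf' : ((Subgroup.closure (T : Set G) : Subgroup G) : Set G).Infinite := hTinf
    have hFG : Group.FG G := exists_fg h3 hA hAi hAci T hTinf'
    obtain ⟨S, hSgen⟩ := hFG.out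
    obtain ⟨g, hgord, hgH⟩ := machine h3 hA hAi hAci S hSgen
    -- the cyclic subgroup generated by g is infinite
    have hzinf : ((Subgroup.zpowers g : Subgroup G) : Set G).Infinite := by
      apply Set.infinite_of_injective_forall_mem (f := fun n : ℕ => g ^ n)
      case hi =>
        have key : ∀ a b : ℕ, a < b → g ^ a ≠ g ^ b := by
          intro a b hab heq
          apply hgord
          rw [isOfFinOrder_iff_pow_eq_one]
          refine ⟨b - a, by omega, ?_⟩
          have h1 : g ^ (b - a) * g ^ a = g ^ b := by
            rw [← pow_add]
            congr 1
            omega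
          have h2 : g ^ (b - a) * g ^ a = g ^ a := by rw [h1, ← heq]
          exact mul_right_cancel (b := g ^ a) (by rw [h2, one_mul])
        intro a b hab
        rcases lt_trichotomy a b with h | h | h
        · exact absurd hab (key a b h)
        · exact h
        · exact absurd hab.symm (key b a h)
      case hf =>
        intro n
        exact ⟨(n : ℤ), by simp⟩
    set E : Set G := symmDiff (lt' g A) A with hEdef
    have hEfin : E.Finite := hgH
    have hfi : (Subgroup.zpowers g).FiniteIndex := by
      apply master hzinf hA hEfin ?_ hAi hAci
      intro x h1 h2
      by_contra hcon
      push_neg at hcon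
      have hdisj' : ∀ w ∈ Subgroup.closure ({g} : Set G), w * x ∉ E := by
        rw [← Subgroup.zpowers_eq_closure]
        exact hcon
      have hconst := coset_const (A := A) (S := ({g} : Set G)) (E := E) ?_ hdisj'
      · obtain ⟨w1, hw1, h1A⟩ := h1
        obtain ⟨w2, hw2, h2c⟩ := h2
        rw [Subgroup.zpowers_eq_closure] at hw1 hw2
        exact h2c ((hconst w2 hw2).mpr ((hconst w1 hw1).mp h1A))
      · intro s hs
        rw [Set.mem_singleton_iff] at hs
        subst hs
        exact subset_rfl
    exact ⟨hFG, g, hgord, hfi⟩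
end

section
/- Any countable additive subgroup G of the real numbers that is not finitely generated has exactly one end; that is, every almost invariant subset of G is either finite or has finite complement in G. In particular, the group of rational numbers has one end. -/
open Set

/-- A subset `A` of an additive group `G` is almost invariant if `A Δ (A + g)` is finite
for every `g : G`. -/
def AlmostInvariantAdd {G : Type*} [AddGroup G] (A : Set G) : Prop :=
  ∀ g : G, (symmDiff A ((fun a => a + g) '' A)).Finite

section Aux

lemma aux_dense_inter_Ioo_infinite {s : Set ℝ} (hs : Dense s) {a b : ℝ} (hab : a < b) :
    (s ∩ Set.Ioo a b).Infinite := by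
  by_contra h
  rw [Set.not_infinite] at h
  have hU : IsOpen (Set.Ioo a b \ (s ∩ Set.Ioo a b)) :=
    isOpen_Ioo.sdiff h.isClosed
  have hUne : (Set.Ioo a b \ (s ∩ Set.Ioo a b)).Nonempty :=
    ((Set.Ioo_infinite hab).diff h).nonempty
  obtain ⟨x, hxs, hxU⟩ := hs.exists_mem_open hU hUne
  exact hxU.2 ⟨hxs, hxU.1⟩

lemma aux_compl_almostInvariant {G : Type*} [AddGroup G] {A : Set G}
    (hA : AlmostInvariantAdd A) : AlmostInvariantAdd Aᶜ := by
  intro g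
  have hbij : Function.Bijective (fun a : G => a + g) := (Equiv.addRight g).bijective
  have : (fun a : G => a + g) '' Aᶜ = ((fun a : G => a + g) '' A)ᶜ :=
    Set.image_compl_eq hbij
  rw [this, compl_symmDiff_compl]
  exact hA g

variable {G : Type*} [AddCommGroup G] (φ : G →+ ℝ)

lemma aux_xor_finite (A : Set G) (hA : AlmostInvariantAdd A) (g : G) :
    {x : G | ¬ (x ∈ A ↔ x + g ∈ A)}.Finite := by
  have h := (hA g).image (fun y => y + (-g))
  refine h.subset ?_
  intro x hx
  simp only [Set.mem_setOf_eq] at hx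
  refine ⟨x + g, ?_, add_neg_cancel_right x g⟩
  rw [Set.mem_symmDiff]
  by_cases hxA : x ∈ A
  · have hxgA : x + g ∉ A := fun hc => hx ⟨fun _ => hc, fun _ => hxA⟩
    right
    exact ⟨⟨x, hxA, rfl⟩, hxgA⟩
  · have hxgA : x + g ∈ A := by
      by_contra hc
      exact hx ⟨fun h' => absurd h' hxA, fun h' => absurd h' hc⟩
    left
    refine ⟨hxgA, fun ⟨y, hy, he⟩ => ?_⟩
    have he' : y + g = x + g := he
    exact hxA (add_right_cancel he' ▸ hy)

lemma aux_exists_bound (A : Set G) (hA : AlmostInvariantAdd A) (g : G) :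
    ∃ R : ℝ, ∀ x : G, R < φ x → (x ∈ A ↔ x + g ∈ A) := by
  obtain ⟨R, hR⟩ := ((aux_xor_finite A hA g).image φ).bddAbove
  refine ⟨R, fun x hx => ?_⟩
  by_contra hc
  exact absurd (hR ⟨x, hc, rfl⟩) (not_le.2 hx)

lemma aux_prop_n (A : Set G) {g : G} {R : ℝ} (hg : 0 < φ g)
    (hR : ∀ x : G, R < φ x → (x ∈ A ↔ x + g ∈ A))
    (x : G) (hx : R < φ x) (n : ℕ) : (x ∈ A ↔ x + n • g ∈ A) := by
  induction n with
  | zero => simp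
  | succ n ih =>
    have hxn : R < φ (x + n • g) := by
      have h1 : φ (x + n • g) = φ x + n * φ g := by
        rw [map_add, map_nsmul, nsmul_eq_mul]
      have h2 : (0:ℝ) ≤ n * φ g := by positivity
      linarith
    have hstep := hR _ hxn
    have : x + (n + 1) • g = (x + n • g) + g := by
      rw [succ_nsmul, ← add_assoc]
    rw [this]
    exact ih.trans hstep

lemma aux_exists_nat_mul {c d : ℝ} (hd : 0 < d) : ∃ n : ℕ, c < n * d := by
  obtain ⟨n, hn⟩ := exists_nat_gt (c / d)
  exact ⟨n, (div_lt_iff₀ hd).1 hn⟩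

lemma aux_not_both_above (A : Set G) (hA : AlmostInvariantAdd A)
    (hg : ∃ g : G, 0 < φ g)
    (h1 : ∀ r : ℝ, ∃ x ∈ A, r < φ x) (h2 : ∀ r : ℝ, ∃ x ∈ Aᶜ, r < φ x) : False := by
  obtain ⟨g, hgpos⟩ := hg
  obtain ⟨R, hR⟩ := aux_exists_bound φ A hA g
  obtain ⟨a, haA, haR⟩ := h1 R
  obtain ⟨b, hbA, hb⟩ := h2 (φ a)
  obtain ⟨R', hR'⟩ := aux_exists_bound φ A hA (b - a)
  obtain ⟨n, hn⟩ := aux_exists_nat_mul (c := max R R' - φ a) hgpos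
  have hφx : max R R' < φ (a + n • g) := by
    have : φ (a + n • g) = φ a + n * φ g := by rw [map_add, map_nsmul, nsmul_eq_mul]
    linarith
  have hxA : a + n • g ∈ A := (aux_prop_n φ A hgpos hR a haR n).1 haA
  have hxh : a + n • g + (b - a) ∈ A :=
    (hR' _ (lt_of_le_of_lt (le_max_right R R') hφx)).1 hxA
  have heq : a + n • g + (b - a) = b + n • g := by abel
  have hbn : b + n • g ∉ A := fun hc => hbA ((aux_prop_n φ A hgpos hR b (haR.trans hb) n).2 hc)
  exact hbn (heq ▸ hxh)

lemma aux_finite_of_bounded (A : Set G) (hA : AlmostInvariantAdd A)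
    (hg : ∃ g : G, 0 < φ g) (M M' : ℝ)
    (hub : ∀ x ∈ A, φ x ≤ M) (hlb : ∀ x ∈ A, M' ≤ φ x) : A.Finite := by
  obtain ⟨g, hgpos⟩ := hg
  obtain ⟨n, hn⟩ := aux_exists_nat_mul (c := M - M') hgpos
  have hdisj : ∀ x ∈ A, x + n • g ∉ A := by
    intro x hx hc
    have h1 := hub _ hc
    have h2 := hlb _ hx
    have h3 : φ (x + n • g) = φ x + n * φ g := by rw [map_add, map_nsmul, nsmul_eq_mul]
    linarith
  refine (hA (n • g)).subset ?_
  intro x hx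
  rw [Set.mem_symmDiff]
  left
  refine ⟨hx, ?_⟩
  rintro ⟨y, hy, he⟩
  have he' : y + n • g = x := he
  exact hdisj y hy (he' ▸ hx)

lemma aux_not_half (A : Set G) (hA : AlmostInvariantAdd A)
    (hinj : Function.Injective φ) (hd : Dense (Set.range φ)) (M : ℝ)
    (hhi : ∀ x : G, M < φ x → x ∈ A) (hlo : ∀ x : G, φ x < -M → x ∉ A) : False := by
  obtain ⟨y, ⟨g, rfl⟩, hg0, _⟩ :
      ∃ y ∈ Set.range φ, y ∈ Set.Ioo (0:ℝ) 1 := by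
    obtain ⟨y, hy1, hy2⟩ := hd.exists_mem_open (isOpen_Ioo (a := (0:ℝ)) (b := 1))
      ⟨(1:ℝ)/2, by norm_num⟩
    exact ⟨y, hy1, hy2.1, hy2.2⟩
  -- the set of transition points is finite
  have hE : {x : G | ¬ (x ∈ A ↔ x + g ∈ A)}.Finite := aux_xor_finite A hA g
  -- every point eventually reaches A
  have hex : ∀ x : G, ∃ n : ℕ, x + n • g ∈ A := by
    intro x
    obtain ⟨n, hn⟩ := aux_exists_nat_mul (c := M - φ x) hg0
    refine ⟨n, hhi _ ?_⟩
    rw [map_add, map_nsmul, nsmul_eq_mul]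
    linarith
  classical
  let t : G → G := fun x => x + (Nat.find (hex x) - 1) • g
  set S : Set G := φ ⁻¹' (Set.Ioo (-M - φ g) (-M)) with hS
  have hSsub : ∀ x ∈ S, x ∉ A := by
    intro x hx
    exact hlo x hx.2
  have htE : ∀ x ∈ S, t x ∈ {x : G | ¬ (x ∈ A ↔ x + g ∈ A)} := by
    intro x hx
    have hx0 : Nat.find (hex x) ≠ 0 := by
      intro h0
      have := Nat.find_spec (hex x)
      rw [h0] at this
      simp at this
      exact hSsub x hx this
    have hlt : Nat.find (hex x) - 1 < Nat.find (hex x) := Nat.sub_lt (Nat.pos_of_ne_zero hx0) one_pos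
    have hnotA : x + (Nat.find (hex x) - 1) • g ∉ A := Nat.find_min (hex x) hlt
    have hsucc : (Nat.find (hex x) - 1) + 1 = Nat.find (hex x) := Nat.succ_pred_eq_of_pos (Nat.pos_of_ne_zero hx0)
    have hA' : x + (Nat.find (hex x) - 1) • g + g ∈ A := by
      have : x + (Nat.find (hex x) - 1) • g + g = x + ((Nat.find (hex x) - 1) + 1) • g := by
        rw [succ_nsmul, ← add_assoc]
      rw [this, hsucc]
      exact Nat.find_spec (hex x)
    exact fun hiff => hnotA (hiff.2 hA')
  have htinj : Set.InjOn t S := by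
    intro x hx x' hx' he
    have hxy : ∀ (u v : G) (k k' : ℕ), u ∈ S → v ∈ S → k ≤ k' →
        u + k • g = v + k' • g → u = v := by
      intro u v k k' hu hv hkk heq
      have h1 : u = v + (k' - k) • g := by
        have : k' • g = (k' - k) • g + k • g := by
          rw [← add_nsmul, Nat.sub_add_cancel hkk]
        rw [this, ← add_assoc] at heq
        exact add_right_cancel heq
      have h2 : φ u = φ v + ((k' - k : ℕ) : ℝ) * φ g := by
        rw [h1, map_add, map_nsmul, nsmul_eq_mul]
      have h3 : φ u - φ v < φ g := by
        have hu' : φ u ∈ Set.Ioo (-M - φ g) (-M) := hu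
        have hv' : φ v ∈ Set.Ioo (-M - φ g) (-M) := hv
        have := hu'.1; have := hu'.2; have := hv'.1; have := hv'.2
        linarith
      have h4 : k' - k = 0 := by
        by_contra hk0
        have hk1 : (1:ℝ) ≤ (k' - k : ℕ) := by
          exact_mod_cast Nat.one_le_iff_ne_zero.2 hk0
        nlinarith
      rw [h1, h4, zero_nsmul, add_zero]
    rcases le_total (Nat.find (hex x) - 1) (Nat.find (hex x') - 1) with hk | hk
    · exact hxy x x' _ _ hx hx' hk he
    · exact (hxy x' x _ _ hx' hx hk he.symm).symm
  have hSinf : S.Infinite := by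
    have h1 : ((Set.range φ) ∩ Set.Ioo (-M - φ g) (-M)).Infinite :=
      aux_dense_inter_Ioo_infinite hd (by linarith)
    have h2 : (Set.Ioo (-M - φ g) (-M) ∩ Set.range φ).Infinite := by
      rwa [Set.inter_comm] at h1
    exact Set.Infinite.preimage' h2
  have hSfin : S.Finite := by
    refine Set.Finite.of_finite_image (hE.subset ?_) htinj
    rintro _ ⟨x, hx, rfl⟩
    exact htE x hx
  exact hSinf hSfin

lemma aux_master {G : Type*} [AddCommGroup G] (φ : G →+ ℝ)
    (hinj : Function.Injective φ) (hd : Dense (Set.range φ))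
    (A : Set G) (hA : AlmostInvariantAdd A) : A.Finite ∨ Aᶜ.Finite := by
  by_contra hc
  push_neg at hc
  obtain ⟨hAinf, hAcinf⟩ := hc
  have hAc : AlmostInvariantAdd Aᶜ := aux_compl_almostInvariant hA
  -- positive and negative elements
  have hgpos : ∃ g : G, 0 < φ g := by
    obtain ⟨y, hy1, hy2⟩ := hd.exists_mem_open (isOpen_Ioo (a := (0:ℝ)) (b := 1))
      ⟨(1:ℝ)/2, by norm_num⟩
    obtain ⟨g, rfl⟩ := hy1
    exact ⟨g, hy2.1⟩
  have hgneg : ∃ g : G, 0 < (-φ) g := by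
    obtain ⟨y, hy1, hy2⟩ := hd.exists_mem_open (isOpen_Ioo (a := (-1:ℝ)) (b := 0))
      ⟨-(1:ℝ)/2, by norm_num⟩
    obtain ⟨g, rfl⟩ := hy1
    refine ⟨g, ?_⟩
    simp only [AddMonoidHom.neg_apply]
    linarith [hy2.2]
  -- dichotomy: an infinite almost invariant set is unbounded above or below
  have dichot : ∀ B : Set G, AlmostInvariantAdd B → ¬ B.Finite →
      (∀ r : ℝ, ∃ x ∈ B, r < φ x) ∨ (∀ r : ℝ, ∃ x ∈ B, φ x < r) := by
    intro B hB hBinf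
    by_contra hcc
    push_neg at hcc
    obtain ⟨⟨r, hr⟩, ⟨r', hr'⟩⟩ := hcc
    exact hBinf (aux_finite_of_bounded φ B hB hgpos r r' hr hr')
  by_cases hUAc : ∀ r : ℝ, ∃ x ∈ Aᶜ, r < φ x
  · by_cases hUA : ∀ r : ℝ, ∃ x ∈ A, r < φ x
    · exact aux_not_both_above φ A hA hgpos hUA hUAc
    · -- A is bounded above
      push_neg at hUA
      obtain ⟨M₁, hM₁⟩ := hUA
      have hUB : ∀ r : ℝ, ∃ x ∈ A, φ x < r := by
        rcases dichot A hA hAinf with h | h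
        · exact absurd h (by push_neg; exact ⟨M₁, hM₁⟩)
        · exact h
      by_cases hUBc : ∀ r : ℝ, ∃ x ∈ Aᶜ, φ x < r
      · -- A and Aᶜ both unbounded below: apply aux_not_both_above with -φ
        refine aux_not_both_above (-φ) A hA hgneg ?_ ?_
        · intro r
          obtain ⟨x, hx1, hx2⟩ := hUB (-r)
          exact ⟨x, hx1, by simp only [AddMonoidHom.neg_apply]; linarith⟩
        · intro r
          obtain ⟨x, hx1, hx2⟩ := hUBc (-r)
          exact ⟨x, hx1, by simp only [AddMonoidHom.neg_apply]; linarith⟩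
      · -- Aᶜ bounded below: A bounded above and Aᶜ bounded below: half configuration on Aᶜ
        push_neg at hUBc
        obtain ⟨M₂, hM₂⟩ := hUBc
        refine aux_not_half φ Aᶜ hAc hinj hd (max M₁ (-M₂)) ?_ ?_
        · intro x hx
          intro hxA
          exact absurd (hM₁ x hxA) (not_le.2 (lt_of_le_of_lt (le_max_left _ _) hx))
        · intro x hx hxAc
          have := hM₂ x hxAc
          have hle : -max M₁ (-M₂) ≤ M₂ := by
            have := le_max_right M₁ (-M₂)
            linarith
          linarith
  · -- Aᶜ bounded above
    push_neg at hUAc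
    obtain ⟨M₁, hM₁⟩ := hUAc
    have hUBc : ∀ r : ℝ, ∃ x ∈ Aᶜ, φ x < r := by
      rcases dichot Aᶜ hAc hAcinf with h | h
      · exact absurd h (by push_neg; exact ⟨M₁, hM₁⟩)
      · exact h
    by_cases hUB : ∀ r : ℝ, ∃ x ∈ A, φ x < r
    · refine aux_not_both_above (-φ) A hA hgneg ?_ ?_
      · intro r
        obtain ⟨x, hx1, hx2⟩ := hUB (-r)
        exact ⟨x, hx1, by simp only [AddMonoidHom.neg_apply]; linarith⟩
      · intro r
        obtain ⟨x, hx1, hx2⟩ := hUBc (-r)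
        exact ⟨x, hx1, by simp only [AddMonoidHom.neg_apply]; linarith⟩
    · -- A bounded below: Aᶜ bounded above, A bounded below: half configuration on A
      push_neg at hUB
      obtain ⟨M₂, hM₂⟩ := hUB
      refine aux_not_half φ A hA hinj hd (max M₁ (-M₂)) ?_ ?_
      · intro x hx
        by_contra hxA
        exact absurd (hM₁ x hxA) (not_le.2 (lt_of_le_of_lt (le_max_left _ _) hx))
      · intro x hx hxA
        have := hM₂ x hxA
        have hle : -max M₁ (-M₂) ≤ M₂ := by
          have := le_max_right M₁ (-M₂)
          linarith
        linarith

end Aux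

/-- Corollary 5.13: any countable additive subgroup of `ℝ` that is not finitely generated
has exactly one end: every almost invariant subset is finite or has finite complement.
In particular, the group of rational numbers has one end. -/
theorem countable_subgroup_of_reals_one_end :
    (∀ G : AddSubgroup ℝ, Countable G → ¬ AddGroup.FG G →
      ∀ A : Set G, AlmostInvariantAdd A → A.Finite ∨ Aᶜ.Finite) ∧
    (∀ A : Set ℚ, AlmostInvariantAdd A → A.Finite ∨ Aᶜ.Finite) := by
  constructor
  · intro G _ hnfg A hA
    have hinj : Function.Injective G.subtype := Subtype.coe_injective
    have hrange : Set.range G.subtype = (G : Set ℝ) := by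
      ext x
      simp [AddSubgroup.coe_subtype]
    have hdense : Dense (Set.range G.subtype) := by
      rcases AddSubgroup.dense_or_cyclic G with hd | ⟨a, ha⟩
      · rwa [hrange]
      · exfalso
        apply hnfg
        rw [AddGroup.fg_iff_addSubgroup_fg]
        exact ⟨{a}, by simpa using ha.symm⟩
    exact aux_master G.subtype hinj hdense A hA
  · intro A hA
    have hinj : Function.Injective (Rat.castHom ℝ).toAddMonoidHom :=
      fun a b h => Rat.cast_injective (α := ℝ) h
    have hdense : Dense (Set.range (Rat.castHom ℝ).toAddMonoidHom) := by
      have : Set.range (Rat.castHom ℝ).toAddMonoidHom = Set.range ((↑) : ℚ → ℝ) := rfl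
      rw [this]
      exact Rat.denseRange_cast
    exact aux_master (Rat.castHom ℝ).toAddMonoidHom hinj hdense A hA
end
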